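/- Let G be a finite abelian group. Then E(G) = d(G) + |G|, where d(G) is the small Davenport constant of G and E(G) is the smallest integer t such that every sequence of t elements of G contains a zero-sum subsequence of length |G|. -/

import Mathlib

/-- `S` has a zero-sum subsequence of length `n`. -/
def HasZeroSumSubseqOfLen {G : Type*} [AddCommGroup G] (S : Multiset G) (n : ℕ) : Prop :=
  ∃ T ≤ S, Multiset.card T = n ∧ T.sum = 0

/-- A sequence is zero-sum free if no nonempty subsequence sums to zero. -/
def ZeroSumFree {G : Type*} [AddCommGroup G] (S : Multiset G) : Prop :=
  ∀ T ≤ S, T ≠ 0 → T.sum ≠ 0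

/-- `EGZconst G` is the smallest `t` such that every sequence of `t` elements
of `G` has a zero-sum subsequence of length `|G|`. -/
noncomputable def EGZconst (G : Type*) [AddCommGroup G] : ℕ :=
  sInf {t | ∀ S : Multiset G, Multiset.card S = t →
    HasZeroSumSubseqOfLen S (Nat.card G)}

/-- The small Davenport constant: the maximal length of a zero-sum free
sequence over `G`. -/
noncomputable def smallDavenport (G : Type*) [AddCommGroup G] : ℕ :=
  sSup {k | ∃ S : Multiset G, Multiset.card S = k ∧ ZeroSumFree S}

open Pointwise
set_option linter.unusedSectionVars false

section Aux
variable {G : Type*} [AddCommGroup G] [DecidableEq G]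

theorem ks_aux (N : ℕ) : ∀ (B A : Finset G), B.card ≤ N → (0:G) ∈ A → (0:G) ∈ B →
    (∀ x ∈ A, ∀ y ∈ B, x + y = 0 → x = 0) →
    A.card + B.card ≤ (A + B).card + 1 := by
  induction N with
  | zero => intro B A hBN hA hB _; exact absurd (Finset.card_pos.2 ⟨0, hB⟩) (by omega)
  | succ N ih =>
    intro B A hBN hA hB hun
    by_cases hc : ∀ e ∈ A, ∀ b ∈ B, b + e ∈ A
    · -- B = {0}
      have hb0 : ∀ b ∈ B, b = 0 := by
        intro b hb
        have himg : B.card ≤ N + 1 := hBN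
        have hsub : A.image (· + b) ⊆ A := by
          intro z hz
          rcases Finset.mem_image.1 hz with ⟨a, ha, rfl⟩
          rw [add_comm]; exact hc a ha b hb
        have hcard : A.card ≤ (A.image (· + b)).card := by
          rw [Finset.card_image_of_injective _ (add_left_injective b)]
        have heq : A.image (· + b) = A := Finset.eq_of_subset_of_card_le hsub hcard
        have h0 : (0:G) ∈ A.image (· + b) := by rw [heq]; exact hA
        rcases Finset.mem_image.1 h0 with ⟨a, ha, hab⟩
        have : a = 0 := hun a ha b hb hab
        rw [this, zero_add] at hab; exact hab.symm ▸ rfl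
      have hBeq : B = {0} := by
        apply Finset.eq_singleton_iff_unique_mem.2 ⟨hB, hb0⟩
      have hAsub : A ⊆ A + B := by
        intro a ha
        exact Finset.mem_add.2 ⟨a, ha, 0, hB, add_zero a⟩
      have h2 := Finset.card_le_card hAsub
      have h3 : B.card = 1 := by rw [hBeq]; rfl
      omega
    · push_neg at hc
      rcases hc with ⟨e, he, b, hb, hbe⟩
      set A' := A ∪ B.image (· + e) with hA'def
      set B' := B ∩ A.image (· - e) with hB'def
      -- cardinal identity
      have himB : (B.image (· + e)).card = B.card :=
        Finset.card_image_of_injective _ (add_left_injective e)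
      have hBimg : B'.image (· + e) = A ∩ B.image (· + e) := by
        ext z
        constructor
        · intro hz
          rcases Finset.mem_image.1 hz with ⟨y, hy, rfl⟩
          rcases Finset.mem_inter.1 hy with ⟨hyB, hyA⟩
          rcases Finset.mem_image.1 hyA with ⟨a, ha, hae⟩
          have : y + e = a := by rw [← hae]; abel
          exact Finset.mem_inter.2 ⟨this ▸ ha, Finset.mem_image.2 ⟨y, hyB, rfl⟩⟩
        · intro hz
          rcases Finset.mem_inter.1 hz with ⟨hzA, hzB⟩
          rcases Finset.mem_image.1 hzB with ⟨y, hy, rfl⟩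
          refine Finset.mem_image.2 ⟨y, Finset.mem_inter.2 ⟨hy, Finset.mem_image.2 ⟨y + e, hzA, by abel⟩⟩, rfl⟩
      have hB'card : B'.card = (A ∩ B.image (· + e)).card := by
        rw [← hBimg, Finset.card_image_of_injective _ (add_left_injective e)]
      have hcards : A'.card + B'.card = A.card + B.card := by
        have := Finset.card_union_add_card_inter A (B.image (· + e))
        rw [hA'def, hB'card]; omega
      -- subset
      have hsum : A' + B' ⊆ A + B := by
        intro z hz
        rcases Finset.mem_add.1 hz with ⟨x, hx, y, hy, rfl⟩
        rcases Finset.mem_inter.1 hy with ⟨hyB, _⟩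
        rcases Finset.mem_union.1 hx with hxA | hxB
        · exact Finset.mem_add.2 ⟨x, hxA, y, hyB, rfl⟩
        · rcases Finset.mem_image.1 hxB with ⟨b₁, hb₁, rfl⟩
          rcases Finset.mem_inter.1 hy with ⟨_, hyA⟩
          rcases Finset.mem_image.1 hyA with ⟨a, ha, rfl⟩
          exact Finset.mem_add.2 ⟨a, ha, b₁, hb₁, by abel⟩
      -- invariants
      have hA'0 : (0:G) ∈ A' := Finset.mem_union_left _ hA
      have hB'0 : (0:G) ∈ B' := by
        refine Finset.mem_inter.2 ⟨hB, Finset.mem_image.2 ⟨e, he, by abel⟩⟩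
      have hun' : ∀ x ∈ A', ∀ y ∈ B', x + y = 0 → x = 0 := by
        intro x hx y hy hxy
        rcases Finset.mem_inter.1 hy with ⟨hyB, hyA⟩
        rcases Finset.mem_union.1 hx with hxA | hxB
        · exact hun x hxA y hyB hxy
        · rcases Finset.mem_image.1 hxB with ⟨b₁, hb₁, rfl⟩
          rcases Finset.mem_image.1 hyA with ⟨a, ha, hae⟩
          -- x + y = b₁ + e + y = 0; a = y + e: then a + b₁ = y + e + b₁ = 0
          have haB : a + b₁ = 0 := by
            have : a = y + e := by rw [← hae]; abel
            rw [this, ← hxy]; abel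
          have ha0 : a = 0 := hun a ha b₁ hb₁ haB
          have hb₁0 : b₁ = 0 := by
            have := haB; rw [ha0, zero_add] at this; exact this
          -- x = b₁ + e = e ; y = -e ; then e + y = 0 with e ∈ A, y ∈ B
          have hxe : b₁ + e = e := by rw [hb₁0, zero_add]
          have hye : e + y = 0 := by rw [← hxy, hxe]
          have he0 : e = 0 := hun e he y hyB hye
          rw [hxe, he0]
      -- smaller
      have hblt : B'.card < B.card := by
        have hbB' : b ∉ B' := by
          intro hbB'
          rcases Finset.mem_inter.1 hbB' with ⟨_, hbA⟩
          rcases Finset.mem_image.1 hbA with ⟨a, ha, hae⟩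
          have : b + e = a := by rw [← hae]; abel
          exact hbe (this ▸ ha)
        exact Finset.card_lt_card ⟨Finset.inter_subset_left, fun hss => hbB' (hss hb)⟩
      have hrec := ih B' A' (by omega) hA'0 hB'0 hun'
      have := Finset.card_le_card hsum
      omega

theorem ks (A B : Finset G) (hA : (0:G) ∈ A) (hB : (0:G) ∈ B)
    (hun : ∀ x ∈ A, ∀ y ∈ B, x + y = 0 → x = 0) :
    A.card + B.card ≤ (A + B).card + 1 :=
  ks_aux B.card B A le_rfl hA hB hun

/-- sums of submultisets of size at most `k` -/
noncomputable def Ysums (S : Multiset G) (k : ℕ) : Finset G :=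
  ((S.powerset.filter (fun T => Multiset.card T ≤ k)).map Multiset.sum).toFinset

lemma mem_Ysums {S : Multiset G} {k : ℕ} {y : G} :
    y ∈ Ysums S k ↔ ∃ T, T ≤ S ∧ Multiset.card T ≤ k ∧ T.sum = y := by
  simp only [Ysums, Multiset.mem_toFinset, Multiset.mem_map, Multiset.mem_filter,
    Multiset.mem_powerset]
  constructor
  · rintro ⟨T, ⟨h1, h2⟩, h3⟩; exact ⟨T, h1, h2, h3⟩
  · rintro ⟨T, h1, h2, h3⟩; exact ⟨T, ⟨h1, h2⟩, h3⟩

theorem gao_lemma [Finite G] (S : Multiset G) (hcard : Nat.card G ≤ Multiset.card S)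
    (K : ℕ) (hK : ∀ a : G, S.count a ≤ K)
    (hno : ∀ T, T ≤ S → T ≠ 0 → Multiset.card T ≤ K → T.sum ≠ 0) : False := by
  have := Fintype.ofFinite G
  have hn : 1 ≤ Nat.card G := Nat.card_pos
  have h0S : (0:G) ∉ S := by
    intro h0
    have h1 : 0 < S.count 0 := Multiset.count_pos.2 h0
    have h2 := hK (0:G)
    exact hno {0} (Multiset.singleton_le.2 h0) (by simp)
      (by simpa using by omega) (by simp)
  -- min-sum
  set msum : ℕ → ℕ := fun k => ∑ a ∈ S.toFinset, min (S.count a) k with hmsum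
  have key : ∀ k, k ≤ K → 1 + msum k ≤ (Ysums S k).card := by
    intro k
    induction k with
    | zero =>
      intro _
      have h0 : (0:G) ∈ Ysums S 0 := mem_Ysums.2 ⟨0, by simp⟩
      have : msum 0 = 0 := by simp [hmsum]
      rw [this]
      simpa using Finset.card_pos.2 ⟨0, h0⟩
    | succ k ih =>
      intro hk1
      have ihk := ih (by omega)
      set F := S.toFinset.filter (fun a => k + 1 ≤ S.count a) with hF
      set A : Finset G := insert 0 F with hA
      set B := Ysums S k with hB
      have h0F : (0:G) ∉ F := by
        simp only [hF, Finset.mem_filter]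
        rintro ⟨h1, -⟩
        exact h0S (Multiset.mem_toFinset.1 h1)
      have hAcard : A.card = F.card + 1 := by
        rw [hA, Finset.card_insert_of_notMem h0F]
      have h0A : (0:G) ∈ A := Finset.mem_insert_self _ _
      have h0B : (0:G) ∈ B := mem_Ysums.2 ⟨0, by simp⟩
      -- the key availability fact
      have hext : ∀ x ∈ F, ∀ y ∈ B, ∃ T', T' ≤ S ∧ T' ≠ 0 ∧
          Multiset.card T' ≤ k + 1 ∧ T'.sum = x + y := by
        intro x hx y hy
        rcases mem_Ysums.1 hy with ⟨T, hTS, hTk, hTs⟩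
        rcases Finset.mem_filter.1 hx with ⟨-, hxc⟩
        refine ⟨x ::ₘ T, ?_, by simp, by simp only [Multiset.card_cons]; omega, by simp [hTs]⟩
        rw [Multiset.le_iff_count]
        intro a
        rw [Multiset.count_cons]
        have h5 := Multiset.count_le_card a T
        have h6 := Multiset.count_le_of_le a hTS
        split_ifs with hax
        · subst hax; omega
        · omega
      have hun : ∀ x ∈ A, ∀ y ∈ B, x + y = 0 → x = 0 := by
        intro x hx y hy hxy
        rcases Finset.mem_insert.1 hx with rfl | hxF
        · rfl
        · rcases hext x hxF y hy with ⟨T', h1, h2, h3, h4⟩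
          exact absurd (h4.trans hxy) (hno T' h1 h2 (h3.trans hk1))
      have hsub : A + B ⊆ Ysums S (k+1) := by
        intro z hz
        rcases Finset.mem_add.1 hz with ⟨x, hx, y, hy, rfl⟩
        rcases Finset.mem_insert.1 hx with rfl | hxF
        · rcases mem_Ysums.1 hy with ⟨T, h1, h2, h3⟩
          exact mem_Ysums.2 ⟨T, h1, by omega, by simp [h3]⟩
        · rcases hext x hxF y hy with ⟨T', h1, h2, h3, h4⟩
          exact mem_Ysums.2 ⟨T', h1, h3, h4⟩
      have hks := ks A B h0A h0B hun
      have hcle := Finset.card_le_card hsub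
      -- msum increment
      have hstep : msum (k+1) = msum k + F.card := by
        rw [hmsum]
        simp only []
        rw [hF, Finset.card_filter]
        rw [← Finset.sum_add_distrib]
        apply Finset.sum_congr rfl
        intro a _
        split_ifs with h
        · omega
        · omega
      omega
  have hfin := key K le_rfl
  have hmsumK : msum K = Multiset.card S := by
    rw [hmsum]
    simp only []
    rw [← Multiset.toFinset_sum_count_eq S]
    apply Finset.sum_congr rfl
    intro a _
    exact min_eq_left (hK a)
  have hYle : (Ysums S K).card ≤ Nat.card G := by
    rw [Nat.card_eq_fintype_card]
    exact le_trans (Finset.card_le_card (Finset.subset_univ _)) (by simp)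
  omega

theorem gao_exists [Finite G] (S : Multiset G)
    (hcard : Nat.card G ≤ Multiset.card S) (K : ℕ) (hK : ∀ a : G, S.count a ≤ K) :
    ∃ T, T ≤ S ∧ T ≠ 0 ∧ Multiset.card T ≤ K ∧ T.sum = 0 := by
  by_contra hno
  push_neg at hno
  exact gao_lemma S hcard K hK (fun T hT h0 hk => hno T hT h0 hk)

section Dav
variable [Finite G]

lemma zsf_card_lt {S : Multiset G} (hS : ZeroSumFree S) :
    Multiset.card S < Nat.card G := by
  set l := S.toList with hl
  have hlen : l.length = Multiset.card S := Multiset.length_toList S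
  have hcoe : (l : Multiset G) = S := Multiset.coe_toList S
  set f : Fin (Multiset.card S + 1) → G := fun i => (l.take i).sum with hf
  have hinj : Function.Injective f := by
    have key : ∀ i j : Fin (Multiset.card S + 1), (i : ℕ) < (j : ℕ) → f i ≠ f j := by
      intro i j hij heq
      set blk := (l.take j).drop i with hblk
      have htt : (l.take (j:ℕ)).take (i:ℕ) = l.take (i:ℕ) := by
        rw [List.take_take, min_eq_left (le_of_lt hij)]
      have hsplit : l.take (i:ℕ) ++ blk = l.take (j:ℕ) := by
        rw [hblk, ← htt, List.take_append_drop]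
      have hsum : (l.take (i:ℕ)).sum + blk.sum = (l.take (j:ℕ)).sum := by
        rw [← List.sum_append, hsplit]
      have hbsum : blk.sum = 0 := by
        have h1 : f i + blk.sum = f j := hsum
        rw [heq] at h1
        have h2 : f j + blk.sum = f j + 0 := by rw [add_zero]; exact h1
        exact add_left_cancel h2
      have hsub : (blk : Multiset G) ≤ S := by
        rw [← hcoe]
        exact Multiset.coe_le.2
          (((List.drop_sublist _ _).trans (List.take_sublist _ _)).subperm)
      have hlblk : blk.length = (j:ℕ) - (i:ℕ) := by
        rw [hblk, List.length_drop, List.length_take]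
        have : (j:ℕ) ≤ l.length := by omega
        omega
      have hne : (blk : Multiset G) ≠ 0 := by
        intro h0
        have : blk.length = 0 := by
          have := congrArg Multiset.card h0
          simpa using this
        omega
      exact hS blk hsub hne (by simpa using hbsum)
    intro i j heq
    by_contra hne
    have hne' : (i : ℕ) ≠ (j : ℕ) := fun hh => hne (Fin.ext hh)
    rcases Nat.lt_or_ge (i:ℕ) (j:ℕ) with h | h
    · exact key i j h heq
    · exact key j i (by omega) heq.symm
  have := Nat.card_le_card_of_injective f hinj
  simpa using this

lemma dav_bddAbove :
    BddAbove {k | ∃ S : Multiset G, Multiset.card S = k ∧ ZeroSumFree S} := by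
  refine ⟨Nat.card G, ?_⟩
  rintro k ⟨S, rfl, hS⟩
  exact le_of_lt (zsf_card_lt hS)

lemma dav_mem :
    ∃ S : Multiset G, Multiset.card S = smallDavenport G ∧ ZeroSumFree S := by
  have hne : {k | ∃ S : Multiset G, Multiset.card S = k ∧ ZeroSumFree S}.Nonempty :=
    ⟨0, 0, rfl, fun T hT h0 => absurd (Multiset.le_zero.1 hT) h0⟩
  exact Nat.sSup_mem hne dav_bddAbove

lemma exists_zerosum {R : Multiset G} (hR : smallDavenport G + 1 ≤ Multiset.card R) :
    ∃ V, V ≤ R ∧ V ≠ 0 ∧ V.sum = 0 := by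
  by_contra h
  push_neg at h
  have hzsf : ZeroSumFree R := fun T hT hT0 => h T hT hT0
  have h2 : Multiset.card R ≤ smallDavenport G :=
    le_csSup dav_bddAbove (⟨R, rfl, hzsf⟩ :
      Multiset.card R ∈ {k | ∃ S : Multiset G, Multiset.card S = k ∧ ZeroSumFree S})
  omega

lemma exists_max_zerosum : ∀ (c : ℕ) (R : Multiset G), Multiset.card R = c →
    ∃ W, W ≤ R ∧ W.sum = 0 ∧ Multiset.card R ≤ Multiset.card W + smallDavenport G := by
  intro c
  induction c using Nat.strong_induction_on with
  | _ c ih =>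
    intro R hc
    by_cases hle : Multiset.card R ≤ smallDavenport G
    · exact ⟨0, Multiset.zero_le R, rfl, by simpa using hle⟩
    · obtain ⟨V, hVR, hV0, hVs⟩ := exists_zerosum (R := R) (by omega)
      have hVpos : 0 < Multiset.card V := Multiset.card_pos.2 hV0
      have hcard' : Multiset.card (R - V) = Multiset.card R - Multiset.card V :=
        Multiset.card_sub hVR
      obtain ⟨W', hW'le, hW's, hW'c⟩ := ih (Multiset.card (R - V))
        (by have := Multiset.card_le_card hVR; omega) (R - V) rfl
      refine ⟨V + W', ?_, by rw [Multiset.sum_add, hVs, hW's, add_zero], ?_⟩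
      · exact (le_tsub_iff_left hVR).1 hW'le
      · have := Multiset.card_le_card hVR
        rw [Multiset.card_add]
        omega
end Dav

/-- greedy prefix hitting a window of width `h` -/
lemma greedy_prefix {α : Type*} (w : α → ℕ) (h : ℕ) :
    ∀ (l : List α) (m : ℕ), (∀ x ∈ l, w x ≤ h) → m ≤ (l.map w).sum + h →
    ∃ p q, l = p ++ q ∧ (p.map w).sum ≤ m ∧ m ≤ (p.map w).sum + h := by
  intro l
  induction l with
  | nil => intro m _ hm; exact ⟨[], [], rfl, by simp, by simpa using hm⟩
  | cons x l ihl =>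
    intro m hw hm
    by_cases hmh : m ≤ h
    · exact ⟨[], x :: l, rfl, by simp, by simpa using hmh⟩
    · have hx : w x ≤ h := hw x List.mem_cons_self
      have hsum : (List.map w (x :: l)).sum = w x + (l.map w).sum := by simp
      obtain ⟨p, q, hpq, h1, h2⟩ := ihl (m - w x) (fun y hy => hw y (List.mem_cons_of_mem _ hy))
        (by omega)
      refine ⟨x :: p, q, by simp [hpq], ?_, ?_⟩
      · simp only [List.map_cons, List.sum_cons]; omega
      · simp only [List.map_cons, List.sum_cons]; omega

lemma card_list_sum (l : List (Multiset G)) :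
    Multiset.card l.sum = (l.map Multiset.card).sum := by
  induction l with
  | nil => simp
  | cons x l ih => simp [ih]

lemma sum_list_sum (l : List (Multiset G)) (h : ∀ P ∈ l, P.sum = 0) :
    (l.sum).sum = 0 := by
  induction l with
  | nil => simp
  | cons x l ih =>
    simp only [List.sum_cons, Multiset.sum_add]
    rw [h x List.mem_cons_self, ih (fun P hP => h P (List.mem_cons_of_mem _ hP)), add_zero]

lemma extract_pieces [Finite G] (K : ℕ) :
    ∀ (c : ℕ) (U : Multiset G), Multiset.card U = c → (∀ a : G, U.count a ≤ K) →
    ∃ (Ps : List (Multiset G)) (R : Multiset G), U = R + Ps.sum ∧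
      Multiset.card R < Nat.card G ∧ ∀ P ∈ Ps, Multiset.card P ≤ K ∧ P.sum = 0 := by
  intro c
  induction c using Nat.strong_induction_on with
  | _ c ih =>
    intro U hc hK
    by_cases hcard : Multiset.card U < Nat.card G
    · exact ⟨[], U, by simp, hcard, by simp⟩
    · push_neg at hcard
      obtain ⟨P, hPU, hP0, hPK, hPs⟩ := gao_exists U hcard K hK
      have hPpos : 0 < Multiset.card P := Multiset.card_pos.2 hP0
      have hcard' : Multiset.card (U - P) = Multiset.card U - Multiset.card P :=
        Multiset.card_sub hPU
      obtain ⟨Ps, R, hdec, hR, hPs'⟩ := ih (Multiset.card (U - P))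
        (by have := Multiset.card_le_card hPU; omega) (U - P) rfl
        (fun a => by
          rw [Multiset.count_sub]
          exact le_trans (Nat.sub_le _ _) (hK a))
      refine ⟨P :: Ps, R, ?_, hR, ?_⟩
      · have : U = (U - P) + P := (tsub_add_cancel_of_le hPU).symm
        rw [this, hdec]
        simp only [List.sum_cons]
        abel
      · intro Q hQ
        rcases List.mem_cons.1 hQ with rfl | hQ'
        · exact ⟨hPK, hPs⟩
        · exact hPs' Q hQ'

-- MAIN UPPER BOUND
theorem upper_bound [Finite G] (S : Multiset G)
    (hS : Multiset.card S = Nat.card G + smallDavenport G) :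
    HasZeroSumSubseqOfLen S (Nat.card G) := by
  classical
  set n := Nat.card G with hn
  set d := smallDavenport G with hd
  have hn1 : 1 ≤ n := Nat.card_pos
  have hSne : S ≠ 0 := by
    intro h0; rw [h0] at hS; simp at hS; omega
  obtain ⟨x0, hx0⟩ := Multiset.exists_mem_of_ne_zero hSne
  obtain ⟨g, hgmem, hgmax⟩ := Finset.exists_max_image S.toFinset (fun a => S.count a)
    ⟨x0, Multiset.mem_toFinset.2 hx0⟩
  have hmax : ∀ a : G, S.count a ≤ S.count g := by
    intro a
    by_cases ha : a ∈ S.toFinset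
    · exact hgmax a ha
    · rw [Multiset.count_eq_zero_of_notMem (fun hmem => ha (Multiset.mem_toFinset.2 hmem))]
      exact Nat.zero_le _
  set h := S.count g with hh
  set S' := S.map (fun x => x - g) with hS'
  have hcount' : ∀ b : G, S'.count b = S.count (b + g) := by
    intro b
    have h1 : (S.map (fun x => x - g)).count ((b + g) - g) = S.count (b + g) :=
      Multiset.count_map_eq_count' _ _ sub_left_injective _
    simpa using h1
  have hcle : ∀ b : G, S'.count b ≤ h := fun b => by rw [hcount']; exact hmax _
  have hcount0 : S'.count 0 = h := by rw [hcount' 0, zero_add]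
  have hcardS' : Multiset.card S' = n + d := by rw [hS', Multiset.card_map, hS]
  have hng : n • g = 0 := card_nsmul_eq_zero'
  -- translate back
  have htrans : ∀ B : Multiset G, B ≤ S' → Multiset.card B = n → B.sum = 0 →
      HasZeroSumSubseqOfLen S n := by
    intro B hB hBc hBs
    refine ⟨B.map (fun x => x + g), ?_, by simp [hBc], ?_⟩
    · have h1 : B.map (fun x => x + g) ≤ S'.map (fun x => x + g) := Multiset.map_le_map hB
      have h2 : S'.map (fun x => x + g) = S := by
        rw [hS', Multiset.map_map]
        have : ((fun x => x + g) ∘ fun x => x - g) = id := by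
          funext x; simp
        rw [this, Multiset.map_id]
      rwa [h2] at h1
    · have h3 : (B.map (fun x => x + g)).sum
          = (B.map id).sum + (B.map (fun _ => g)).sum := by
        rw [← Multiset.sum_map_add]
        rfl
      rw [h3, Multiset.map_id, Multiset.map_const', Multiset.sum_replicate, hBc, hBs, zero_add,
        hng]
  by_cases hhn : n ≤ h
  · -- take n zeros
    refine htrans (Multiset.replicate n 0) ?_ (by simp) (by simp)
    rw [Multiset.le_iff_count]
    intro a
    rw [Multiset.count_replicate]
    split_ifs with ha
    · subst ha; omega
    · exact Nat.zero_le _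
  · push_neg at hhn
    have hrep : Multiset.replicate h (0:G) ≤ S' := by
      rw [Multiset.le_iff_count]
      intro a
      rw [Multiset.count_replicate]
      split_ifs with ha
      · subst ha; omega
      · exact Nat.zero_le _
    set T := S' - Multiset.replicate h (0:G) with hT
    have hTc : ∀ a : G, T.count a ≤ h := fun a => by
      rw [hT, Multiset.count_sub]
      exact le_trans (Nat.sub_le _ _) (hcle a)
    have hTcard : Multiset.card T + h = n + d := by
      have h1 := Multiset.card_sub hrep
      rw [Multiset.card_replicate, ← hT] at h1
      have h2 := Multiset.card_le_card hrep
      rw [Multiset.card_replicate] at h2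
      omega
    obtain ⟨Ps, R, hdec, hRlt, hPs⟩ := extract_pieces h (Multiset.card T) T rfl hTc
    obtain ⟨W, hWR, hWs, hWd⟩ := exists_max_zerosum (Multiset.card R) R rfl
    set L := Multiset.card W with hL
    set M := (Ps.map Multiset.card).sum with hM
    have hTRM : Multiset.card T = Multiset.card R + M := by
      rw [hdec, Multiset.card_add, card_list_sum]
    have hLR : L ≤ Multiset.card R := Multiset.card_le_card hWR
    obtain ⟨p, q, hpq, hp1, hp2⟩ := greedy_prefix Multiset.card h Ps (n - L)
      (fun P hP => (hPs P hP).1) (by omega)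
    set s := (p.map Multiset.card).sum with hs
    set z := n - L - s with hz
    have hmemp : ∀ P ∈ p, Multiset.card P ≤ h ∧ P.sum = 0 := by
      intro P hP
      exact hPs P (by rw [hpq]; exact List.mem_append_left _ hP)
    set B := W + p.sum + Multiset.replicate z (0:G) with hB
    have hBsum : B.sum = 0 := by
      rw [hB, Multiset.sum_add, Multiset.sum_add, hWs,
        sum_list_sum p (fun P hP => (hmemp P hP).2), Multiset.sum_replicate, smul_zero,
        add_zero, add_zero]
    have hcardB : Multiset.card B = n := by
      rw [hB, Multiset.card_add, Multiset.card_add, card_list_sum, Multiset.card_replicate,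
        ← hL, ← hs]
      omega
    have hBS' : B ≤ S' := by
      have h1 : W + p.sum ≤ T := by
        rw [hdec]
        have h2 : p.sum ≤ Ps.sum := by
          rw [hpq, List.sum_append]
          exact le_self_add
        exact add_le_add hWR h2
      have h3 : B ≤ T + Multiset.replicate h (0:G) := by
        rw [hB]
        exact add_le_add h1 ((Multiset.replicate_le_replicate 0).2 (by omega))
      rwa [tsub_add_cancel_of_le hrep] at h3
    exact htrans B hBS' hcardB hBsum

-- LOWER BOUND
theorem lower_counter [Finite G] (t : ℕ) (ht : t < Nat.card G + smallDavenport G) :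
    ∃ S : Multiset G, Multiset.card S = t ∧ ¬ HasZeroSumSubseqOfLen S (Nat.card G) := by
  classical
  set n := Nat.card G with hn
  set d := smallDavenport G with hd
  have hn1 : 1 ≤ n := Nat.card_pos
  by_cases htn : t < n
  · refine ⟨Multiset.replicate t 0, by simp, ?_⟩
    rintro ⟨T, hT, hTc, -⟩
    have h1 := Multiset.card_le_card hT
    rw [Multiset.card_replicate, hTc] at h1
    omega
  · push_neg at htn
    obtain ⟨Sd, hSdc, hSdz⟩ := dav_mem (G := G)
    set ℓ := t + 1 - n with hℓ
    have hℓd : ℓ ≤ d := by omega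
    set l1 := Sd.toList.take ℓ with hl1
    have hsub : (l1 : Multiset G) ≤ Sd := by
      rw [← Multiset.coe_toList Sd]
      exact Multiset.coe_le.2 (List.take_sublist _ _).subperm
    have hlen : l1.length = ℓ := by
      rw [hl1, List.length_take, Multiset.length_toList, hSdc]
      omega
    set S1 : Multiset G := (l1 : Multiset G) with hS1
    have hS1c : Multiset.card S1 = ℓ := by
      rw [hS1, Multiset.coe_card, hlen]
    have hS1z : ZeroSumFree S1 := fun T hT h0 => hSdz T (le_trans hT hsub) h0
    have h0S1 : S1.count 0 = 0 := by
      rw [Multiset.count_eq_zero]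
      intro h0
      exact hS1z {0} (Multiset.singleton_le.2 h0) (by simp) (by simp)
    refine ⟨S1 + Multiset.replicate (n-1) 0, ?_, ?_⟩
    · rw [Multiset.card_add, Multiset.card_replicate, hS1c]
      omega
    · rintro ⟨T, hT, hTc, hTs⟩
      set T1 := T.filter (fun x => x ≠ 0) with hT1
      set T0 := T.filter (fun x => ¬ x ≠ 0) with hT0
      have hsplit : T1 + T0 = T := Multiset.filter_add_not _ T
      have hT0z : ∀ x ∈ T0, x = 0 := by
        intro x hx
        have := Multiset.of_mem_filter hx
        simpa using this
      have hT0s : T0.sum = 0 := Multiset.sum_eq_zero hT0z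
      have hT1s : T1.sum = 0 := by
        have h1 : T1.sum + T0.sum = T.sum := by rw [← Multiset.sum_add, hsplit]
        rw [hT0s, add_zero, hTs] at h1
        exact h1
      have hT1S1 : T1 ≤ S1 := by
        have h1 : T1 ≤ (S1 + Multiset.replicate (n-1) 0).filter (fun x => x ≠ 0) :=
          Multiset.filter_le_filter _ hT
        rw [Multiset.filter_add] at h1
        have h2 : (Multiset.replicate (n-1) (0:G)).filter (fun x => x ≠ 0) = 0 := by
          rw [Multiset.filter_eq_nil]
          intro a ha
          have := Multiset.eq_of_mem_replicate ha
          simp [this]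
        rw [h2, add_zero] at h1
        exact le_trans h1 (Multiset.filter_le _ _)
      have hT0card : Multiset.card T0 ≤ n - 1 := by
        have h1 : T0 = Multiset.replicate (Multiset.card T0) 0 :=
          Multiset.eq_replicate_card.2 hT0z
        have h2 : T0.count 0 = Multiset.card T0 := by
          conv_lhs => rw [h1]
          simp
        have h3 : T0.count 0 ≤ T.count 0 :=
          Multiset.count_le_of_le 0 (Multiset.filter_le _ _)
        have h4 : T.count 0 ≤ (S1 + Multiset.replicate (n-1) 0).count 0 :=
          Multiset.count_le_of_le 0 hT
        rw [Multiset.count_add, Multiset.count_replicate, h0S1] at h4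
        simp at h4
        omega
      have hT1ne : T1 ≠ 0 := by
        intro hT1e
        have h1 : Multiset.card T1 + Multiset.card T0 = Multiset.card T := by
          rw [← Multiset.card_add, hsplit]
        rw [hT1e] at h1
        simp at h1
        omega
      exact hS1z T1 hT1S1 hT1ne hT1s

end Aux

/-- Gao's theorem: for a finite abelian group `G`, `E(G) = d(G) + |G|`. -/
theorem EGZconst_eq_davenport_add_card (G : Type*) [AddCommGroup G] [Finite G] :
    EGZconst G = smallDavenport G + Nat.card G := by
  classical
  have hmem : (Nat.card G + smallDavenport G) ∈
      {t | ∀ S : Multiset G, Multiset.card S = t → HasZeroSumSubseqOfLen S (Nat.card G)} :=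
    fun S hS => upper_bound S hS
  have hlb : ∀ t ∈ {t | ∀ S : Multiset G, Multiset.card S = t →
      HasZeroSumSubseqOfLen S (Nat.card G)}, Nat.card G + smallDavenport G ≤ t := by
    intro t htset
    by_contra hlt
    push_neg at hlt
    obtain ⟨S, hSc, hSno⟩ := lower_counter t hlt
    exact hSno (htset S hSc)
  have hmain : EGZconst G = Nat.card G + smallDavenport G := by
    unfold EGZconst
    exact le_antisymm (Nat.sInf_le hmem) (hlb _ (Nat.sInf_mem ⟨_, hmem⟩))
  rw [hmain, add_comm]
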